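/- Fix an FU k and two opponent power vectors p_{-k} ≤ p'_{-k} (componentwise, with nonnegative entries within the caps). Assume that for every opponent vector q_{-k} with p_{-k} ≤ q_{-k} ≤ p'_{-k}, the best response b = p̂_k(q_{-k}) satisfies h_{k,k}·b² ≥ p_a·(N_k + h_{0,k}·p_0 + h_{k,k}·b + Σ_{j≠k} h_{j,k}·q_j). Then the best response is monotone: p̂_k(p'_{-k}) ≥ p̂_k(p_{-k}). -/

import Mathlib

open Real Finset
open Set

/-- SINR of FU `k`. -/
noncomputable def sinr {K : ℕ} (hff : Fin K → Fin K → ℝ) (h0f N : Fin K → ℝ)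
    (p0 : ℝ) (k : Fin K) (p : Fin K → ℝ) : ℝ :=
  hff k k * p k / (N k + h0f k * p0 + ∑ j ∈ Finset.univ.erase k, hff j k * p j)

/-- Net payoff of FU `k`. -/
noncomputable def payoff {K : ℕ} (W pa p0 : ℝ) (hff : Fin K → Fin K → ℝ)
    (h0f hf0 N lam : Fin K → ℝ) (k : Fin K) (p : Fin K → ℝ) : ℝ :=
  W * Real.log (1 + sinr hff h0f N p0 k p) / (p k + pa) - lam k * hf0 k * p k

/-- `x` is a best response of FU `k` to the opponents' powers in `q`. -/
def IsBestResponse {K : ℕ} (W pa p0 : ℝ) (hff : Fin K → Fin K → ℝ)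
    (h0f hf0 N lam pmax : Fin K → ℝ) (k : Fin K) (q : Fin K → ℝ) (x : ℝ) : Prop :=
  x ∈ Set.Icc (0:ℝ) (pmax k) ∧
    ∀ y ∈ Set.Icc (0:ℝ) (pmax k),
      payoff W pa p0 hff h0f hf0 N lam k (Function.update q k y) ≤
        payoff W pa p0 hff h0f hf0 N lam k (Function.update q k x)

section
variable (h pa : ℝ)

noncomputable def mfun (T x : ℝ) : ℝ := h * (x + pa) / (T + h * x) - Real.log (1 + h * x / T)
noncomputable def Ffun (T x : ℝ) : ℝ := mfun h pa T x / (x + pa)^2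

lemma hasDerivAt_mx (T x : ℝ) (hh : 0 < h) (hT : 0 < T) (hx : 0 ≤ x) :
    HasDerivAt (mfun h pa T) (-(h^2 * (x + pa)) / (T + h * x)^2) x := by
  have hTx : 0 < T + h * x := by positivity
  have h1 : HasDerivAt (fun y : ℝ => h * (y + pa)) h x := by
    simpa using ((hasDerivAt_id x).add_const pa).const_mul h
  have h2 : HasDerivAt (fun y : ℝ => T + h * y) h x := by
    simpa using ((hasDerivAt_id x).const_mul h).const_add T
  have hdiv := h1.div h2 hTx.ne'
  have h3 : HasDerivAt (fun y : ℝ => 1 + h * y / T) (h / T) x := by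
    simpa using (((hasDerivAt_id x).const_mul h).div_const T).const_add 1
  have harg : (0:ℝ) < 1 + h * x / T := by positivity
  have hlog := h3.log harg.ne'
  have := hdiv.sub hlog
  refine this.congr_deriv ?_
  field_simp
  ring

lemma hasDerivAt_Fx (T x : ℝ) (hpa : 0 < pa) (hh : 0 < h) (hT : 0 < T) (hx : 0 ≤ x) :
    HasDerivAt (Ffun h pa T)
      ((-(h^2 * (x + pa)) / (T + h * x)^2 * (x + pa)^2 - mfun h pa T x * (2 * (x + pa))) /
        ((x + pa)^2)^2) x := by
  have hden : HasDerivAt (fun y : ℝ => (y + pa)^2) (2 * (x + pa)) x := by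
    have := ((hasDerivAt_id x).add_const pa).pow 2
    exact this.congr_deriv (by simp)
  have := (hasDerivAt_mx h pa T x hh hT hx).div hden (by positivity)
  exact this

lemma hasDerivAt_FT (T x : ℝ) (hpa : 0 < pa) (hh : 0 < h) (hT : 0 < T) (hx : 0 ≤ x) :
    HasDerivAt (fun t : ℝ => Ffun h pa t x)
      (h * (h * x^2 - pa * T) / (T * (T + h * x)^2 * (x + pa)^2)) T := by
  have hTx : 0 < T + h * x := by positivity
  have h1 : HasDerivAt (fun t : ℝ => t + h * x) 1 T := by
    simpa using (hasDerivAt_id T).add_const (h * x)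
  have hdiv : HasDerivAt (fun t : ℝ => h * (x + pa) / (t + h * x))
      ((0 * (T + h * x) - h * (x + pa) * 1) / (T + h * x)^2) T :=
    (hasDerivAt_const T (h * (x + pa))).div h1 hTx.ne'
  have h2 : HasDerivAt (fun t : ℝ => 1 + h * x / t) (h * x * (-(T^2)⁻¹)) T := by
    simpa [div_eq_mul_inv, mul_comm] using ((hasDerivAt_inv hT.ne').const_mul (h * x)).const_add 1
  have harg : (0:ℝ) < 1 + h * x / T := by positivity
  have hlog := h2.log harg.ne'
  have := (hdiv.sub hlog).div_const ((x + pa)^2)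
  show HasDerivAt (fun t : ℝ => (h * (x + pa) / (t + h * x) - Real.log (1 + h * x / t)) / (x + pa)^2) _ T
  refine this.congr_deriv ?_
  field_simp
  ring

lemma key_contradiction (W c S S' b b' : ℝ) (hW : 0 < W) (hpa : 0 < pa) (hc : 0 ≤ c)
    (hh : 0 < h) (hS : 0 < S) (hSS' : S ≤ S') (hb'0 : 0 ≤ b') (hbb' : b' < b)
    (cond' : pa * (S' + h * b') ≤ h * b' ^ 2)
    (h1 : 0 ≤ W * Ffun h pa S b - c)
    (h2 : W * Ffun h pa S' b' - c ≤ 0) : False := by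
  have hS' : 0 < S' := lt_of_lt_of_le hS hSS'
  have hFSb : 0 ≤ Ffun h pa S b := by
    have hW0 : W * 0 ≤ W * Ffun h pa S b := by rw [mul_zero]; linarith
    exact le_of_mul_le_mul_left hW0 hW
  have hmSb : 0 ≤ mfun h pa S b := by
    have hposb : ((b:ℝ) + pa)^2 ≠ 0 := (pow_pos (by linarith : (0:ℝ) < b + pa) 2).ne'
    have := mul_nonneg hFSb (sq_nonneg (b + pa))
    simp only [Ffun] at this
    rwa [div_mul_cancel₀ _ hposb] at this
  -- m S is antitone on [b', b]
  have hanti : AntitoneOn (mfun h pa S) (Set.Icc b' b) := by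
    apply antitoneOn_of_deriv_nonpos (convex_Icc _ _)
    · intro x hx
      exact (hasDerivAt_mx h pa S x hh hS (hb'0.trans hx.1)).continuousAt.continuousWithinAt
    · intro x hx
      rw [interior_Icc] at hx
      exact (hasDerivAt_mx h pa S x hh hS (hb'0.trans hx.1.le)).differentiableAt.differentiableWithinAt
    · intro x hx
      rw [interior_Icc] at hx
      have hx0 : 0 ≤ x := hb'0.trans hx.1.le
      rw [(hasDerivAt_mx h pa S x hh hS hx0).deriv]
      have hp2 : (0:ℝ) < (S + h * x)^2 := by positivity
      apply div_nonpos_of_nonpos_of_nonneg _ hp2.le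
      nlinarith
  -- F S is strictly antitone on [b', b]
  have hstrict : StrictAntiOn (Ffun h pa S) (Set.Icc b' b) := by
    apply strictAntiOn_of_deriv_neg (convex_Icc _ _)
    · intro x hx
      exact (hasDerivAt_Fx h pa S x hpa hh hS (hb'0.trans hx.1)).continuousAt.continuousWithinAt
    · intro x hx
      rw [interior_Icc] at hx
      have hx0 : 0 ≤ x := hb'0.trans hx.1.le
      rw [(hasDerivAt_Fx h pa S x hpa hh hS hx0).deriv]
      have hm : 0 ≤ mfun h pa S x :=
        hmSb.trans (hanti ⟨hx.1.le, hx.2.le⟩ (right_mem_Icc.2 hbb'.le) hx.2.le)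
      apply div_neg_of_neg_of_pos _ (by positivity)
      have hnum : -(h^2 * (x + pa)) / (S + h * x)^2 < 0 := by
        apply div_neg_of_neg_of_pos _ (by positivity)
        have : (0:ℝ) < h^2 * (x + pa) := by positivity
        linarith
      have t1 : -(h^2 * (x + pa)) / (S + h * x)^2 * (x + pa)^2 < 0 :=
        mul_neg_of_neg_of_pos hnum (by positivity)
      have t2 : 0 ≤ mfun h pa S x * (2 * (x + pa)) := mul_nonneg hm (by positivity)
      linarith
  have hFA : Ffun h pa S b < Ffun h pa S b' :=
    hstrict (left_mem_Icc.2 hbb'.le) (right_mem_Icc.2 hbb'.le) hbb'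
  -- F · b' is monotone on [S, S']
  have hmono : MonotoneOn (fun t => Ffun h pa t b') (Set.Icc S S') := by
    apply monotoneOn_of_deriv_nonneg (convex_Icc _ _)
    · intro t ht
      exact (hasDerivAt_FT h pa t b' hpa hh (hS.trans_le ht.1) hb'0).continuousAt.continuousWithinAt
    · intro t ht
      rw [interior_Icc] at ht
      exact (hasDerivAt_FT h pa t b' hpa hh (hS.trans ht.1) hb'0).differentiableAt.differentiableWithinAt
    · intro t ht
      rw [interior_Icc] at ht
      have hT : 0 < t := hS.trans ht.1
      rw [(hasDerivAt_FT h pa t b' hpa hh hT hb'0).deriv]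
      apply div_nonneg _ (by positivity)
      have hpt : pa * t ≤ h * b'^2 := by
        nlinarith [mul_nonneg hpa.le (sub_nonneg.2 ht.2.le), mul_nonneg (mul_nonneg hpa.le hh.le) hb'0]
      nlinarith
  have hFB : Ffun h pa S b' ≤ Ffun h pa S' b' :=
    hmono (left_mem_Icc.2 hSS') (right_mem_Icc.2 hSS') hSS'
  have : W * Ffun h pa S b < W * Ffun h pa S' b' := by
    have := hFA.trans_le hFB
    exact mul_lt_mul_of_pos_left this hW
  linarith

lemma hasDerivAt_U (W pa c h T x : ℝ) (hpa : 0 < pa) (hT : 0 < T) (hh : 0 < h) (hx : 0 ≤ x) :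
    HasDerivAt (fun y : ℝ => W * Real.log (1 + h * y / T) / (y + pa) - c * y)
      (W * ((h * (x + pa) / (T + h * x) - Real.log (1 + h * x / T)) / (x + pa)^2) - c) x := by
  have hTx : 0 < T + h * x := by positivity
  have hxpa : 0 < x + pa := by positivity
  have h3 : HasDerivAt (fun y : ℝ => 1 + h * y / T) (h / T) x := by
    simpa using (((hasDerivAt_id x).const_mul h).div_const T).const_add 1
  have harg : (0:ℝ) < 1 + h * x / T := by positivity
  have hnum := (h3.log harg.ne').const_mul W
  have hden : HasDerivAt (fun y : ℝ => y + pa) 1 x := by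
    simpa using (hasDerivAt_id x).add_const pa
  have hfrac := hnum.div hden hxpa.ne'
  have hc : HasDerivAt (fun y : ℝ => c * y) c x := by
    simpa using (hasDerivAt_id x).const_mul c
  have := hfrac.sub hc
  refine this.congr_deriv ?_
  field_simp

end

theorem bestResponse_monotone {K : ℕ} (hK : 1 ≤ K)
    (W pa p0 : ℝ) (hW : 0 < W) (hpa : 0 < pa) (hp0 : 0 ≤ p0)
    (hff : Fin K → Fin K → ℝ) (h0f hf0 N lam pmax : Fin K → ℝ)
    (hhff : ∀ i j, 0 < hff i j) (hh0f : ∀ i, 0 < h0f i) (hhf0 : ∀ i, 0 < hf0 i)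
    (hN : ∀ i, 0 < N i) (hlam : ∀ i, 0 ≤ lam i) (hpmax : ∀ i, 0 < pmax i)
    (k : Fin K) (p p' : Fin K → ℝ)
    (hp : ∀ i, i ≠ k → 0 ≤ p i) (hle : ∀ i, i ≠ k → p i ≤ p' i)
    (hcap : ∀ i, i ≠ k → p' i ≤ pmax i)
    (hcond : ∀ q : Fin K → ℝ, (∀ i, i ≠ k → p i ≤ q i ∧ q i ≤ p' i) →
      ∀ b : ℝ, IsBestResponse W pa p0 hff h0f hf0 N lam pmax k q b →
        pa * (N k + h0f k * p0 + hff k k * b + ∑ j ∈ Finset.univ.erase k, hff j k * q j) ≤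
          hff k k * b ^ 2)
    (b b' : ℝ)
    (hb : IsBestResponse W pa p0 hff h0f hf0 N lam pmax k p b)
    (hb' : IsBestResponse W pa p0 hff h0f hf0 N lam pmax k p' b') :
    b ≤ b' := by
  by_contra hcon
  push_neg at hcon
  set hk : ℝ := hff k k with hkdef
  set c : ℝ := lam k * hf0 k with hcdef
  set S : ℝ := N k + h0f k * p0 + ∑ j ∈ Finset.univ.erase k, hff j k * p j with hSdef
  set S' : ℝ := N k + h0f k * p0 + ∑ j ∈ Finset.univ.erase k, hff j k * p' j with hS'def
  have hkpos : 0 < hk := hhff k k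
  have hcnn : 0 ≤ c := mul_nonneg (hlam k) (hhf0 k).le
  have hsum_nn : (0:ℝ) ≤ ∑ j ∈ Finset.univ.erase k, hff j k * p j :=
    Finset.sum_nonneg fun j hj =>
      mul_nonneg (hhff j k).le (hp j (Finset.ne_of_mem_erase hj))
  have hS : 0 < S := by
    have : 0 ≤ h0f k * p0 := mul_nonneg (hh0f k).le hp0
    have := hN k
    rw [hSdef]; positivity
  have hSS' : S ≤ S' := by
    rw [hSdef, hS'def]
    have : ∑ j ∈ Finset.univ.erase k, hff j k * p j ≤
        ∑ j ∈ Finset.univ.erase k, hff j k * p' j :=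
      Finset.sum_le_sum fun j hj =>
        mul_le_mul_of_nonneg_left (hle j (Finset.ne_of_mem_erase hj)) (hhff j k).le
    linarith
  -- payoff rewriting
  have hpay : ∀ (q : Fin K → ℝ) (x : ℝ),
      payoff W pa p0 hff h0f hf0 N lam k (Function.update q k x) =
        W * Real.log (1 + hff k k * x /
          (N k + h0f k * p0 + ∑ j ∈ Finset.univ.erase k, hff j k * q j)) / (x + pa)
          - lam k * hf0 k * x := by
    intro q x
    have hsum : ∑ j ∈ Finset.univ.erase k, hff j k * Function.update q k x j
        = ∑ j ∈ Finset.univ.erase k, hff j k * q j :=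
      Finset.sum_congr rfl fun j hj => by
        rw [Function.update_of_ne (Finset.ne_of_mem_erase hj)]
    simp [payoff, sinr, hsum]
  have hb0 : (0:ℝ) ≤ b := hb.1.1
  have hbmax : b ≤ pmax k := hb.1.2
  have hb'0 : (0:ℝ) ≤ b' := hb'.1.1
  have hbpos : 0 < b := hb'0.trans_lt hcon
  -- the condition at (p', b')
  have cond' : pa * (S' + hk * b') ≤ hk * b' ^ 2 := by
    have := hcond p' (fun i hi => ⟨hle i hi, le_rfl⟩) b' hb'
    rw [hS'def, hkdef]; linarith
  -- U functions
  have hUb : HasDerivAt (fun y : ℝ => W * Real.log (1 + hk * y / S) / (y + pa) - c * y)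
      (W * Ffun hk pa S b - c) b := by
    have := hasDerivAt_U W pa c hk S b hpa hS hkpos hb0
    simpa [Ffun, mfun] using this
  have hUb' : HasDerivAt (fun y : ℝ => W * Real.log (1 + hk * y / S') / (y + pa) - c * y)
      (W * Ffun hk pa S' b' - c) b' := by
    have := hasDerivAt_U W pa c hk S' b' hpa (hS.trans_le hSS') hkpos hb'0
    simpa [Ffun, mfun] using this
  -- max conditions
  have hmaxb : ∀ y ∈ Set.Icc (0:ℝ) (pmax k),
      W * Real.log (1 + hk * y / S) / (y + pa) - c * y ≤
        W * Real.log (1 + hk * b / S) / (b + pa) - c * b := by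
    intro y hy
    have := hb.2 y hy
    rw [hpay, hpay] at this
    exact this
  have hmaxb' : ∀ y ∈ Set.Icc (0:ℝ) (pmax k),
      W * Real.log (1 + hk * y / S') / (y + pa) - c * y ≤
        W * Real.log (1 + hk * b' / S') / (b' + pa) - c * b' := by
    intro y hy
    have := hb'.2 y hy
    rw [hpay, hpay] at this
    exact this
  -- derivative sign at b (left slopes)
  have key1 : 0 ≤ W * Ffun hk pa S b - c := by
    set U : ℝ → ℝ := fun y => W * Real.log (1 + hk * y / S) / (y + pa) - c * y with hUdef
    have ht := hasDerivAt_iff_tendsto_slope.mp hUb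
    have ht' : Filter.Tendsto (slope U b) (nhdsWithin b (Set.Iio b))
        (nhds (W * Ffun hk pa S b - c)) :=
      ht.mono_left (nhdsWithin_mono _ fun y hy => ne_of_lt hy)
    refine ge_of_tendsto ht' ?_
    filter_upwards [Ioo_mem_nhdsLT hbpos] with y hy
    have hyIcc : y ∈ Set.Icc (0:ℝ) (pmax k) := ⟨hy.1.le, hy.2.le.trans hbmax⟩
    have hUy : U y ≤ U b := hmaxb y hyIcc
    rw [slope_def_field]
    apply div_nonneg_of_nonpos (by linarith) (by linarith [hy.2])
  -- derivative sign at b' (right slopes)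
  have hb'max : b' < pmax k := hcon.trans_le hbmax
  have key2 : W * Ffun hk pa S' b' - c ≤ 0 := by
    set U : ℝ → ℝ := fun y => W * Real.log (1 + hk * y / S') / (y + pa) - c * y with hUdef
    have ht := hasDerivAt_iff_tendsto_slope.mp hUb'
    have ht' : Filter.Tendsto (slope U b') (nhdsWithin b' (Set.Ioi b'))
        (nhds (W * Ffun hk pa S' b' - c)) :=
      ht.mono_left (nhdsWithin_mono _ fun y hy => ne_of_gt hy)
    refine le_of_tendsto ht' ?_
    filter_upwards [Ioo_mem_nhdsGT hb'max] with y hy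
    have hyIcc : y ∈ Set.Icc (0:ℝ) (pmax k) := ⟨hb'0.trans hy.1.le, hy.2.le⟩
    have hUy : U y ≤ U b' := hmaxb' y hyIcc
    rw [slope_def_field]
    apply div_nonpos_of_nonpos_of_nonneg (by linarith) (by linarith [hy.1])
  exact key_contradiction hk pa W c S S' b b' hW hpa hcnn hkpos hS hSS' hb'0 hcon cond' key1 key2
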